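/- arXiv:2410.23046 — 2 statements merged into one kernel-verified Lean document; each statement's English description precedes it below -/
import Mathlib

section
/- Let φ'(x) = 1 − π̂_{ŷ_bay(x)}(x) and define E(β) = P(ŷ_bay ≠ ŷ | X ∈ L_β(φ')). Then E(β) = max(0, 1 − P(X ∈ L_{1/2}(φ'))/P(X ∈ L_β(φ'))) whenever P(X ∈ L_β(φ')) > 0; consequently E is zero on (0, 1/2] and nondecreasing on (1/2, 1], with E(1) = P(ŷ_bay ≠ ŷ). -/
open MeasureTheory

/-- With `φ'(x) = 1 - π̂_{ŷ_bay(x)}(x)` taking values in `[0,1]` and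
`E β = P(ŷ_bay ≠ ŷ | X ∈ L_β(φ'))`, one has
`E β = max 0 (1 - P(X ∈ L_{1/2}(φ')) / P(X ∈ L_β(φ')))` whenever `P(X ∈ L_β(φ')) > 0`;
consequently `E` vanishes on `(0, 1/2]`, is nondecreasing on `(1/2, 1]`, and
`E 1 = P(ŷ_bay ≠ ŷ)`. -/
theorem stmt_3 {Ω 𝒳 : Type*} [MeasurableSpace Ω] [MeasurableSpace 𝒳]
    (μ : Measure Ω) [IsProbabilityMeasure μ]
    (X : Ω → 𝒳) (hX : Measurable X)
    (pihat : 𝒳 → Fin 2 → ℝ) (ybay yhat : 𝒳 → Fin 2)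
    (φ' : 𝒳 → ℝ) (hφ'm : Measurable φ')
    (hφ'def : ∀ x, φ' x = 1 - pihat x (ybay x))
    (hφ'range : ∀ x, 0 ≤ φ' x ∧ φ' x ≤ 1)
    (hiff : ∀ x, yhat x ≠ ybay x ↔ (1/2 : ℝ) ≤ φ' x)
    (hatom : μ (X ⁻¹' {x | φ' x = 1/2}) = 0) :
    let L : ℝ → Set Ω := fun β => X ⁻¹' {x | φ' x ≤ β}
    let E : ℝ → ℝ := fun β =>
      (μ ({ω | ybay (X ω) ≠ yhat (X ω)} ∩ L β)).toReal / (μ (L β)).toReal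
    (∀ β, 0 < μ (L β) →
        E β = max 0 (1 - (μ (L (1/2))).toReal / (μ (L β)).toReal))
    ∧ (∀ β, 0 < β → β ≤ 1/2 → 0 < μ (L β) → E β = 0)
    ∧ (∀ β γ, 1/2 < β → β ≤ γ → γ ≤ 1 → 0 < μ (L β) → E β ≤ E γ)
    ∧ E 1 = (μ {ω | ybay (X ω) ≠ yhat (X ω)}).toReal := by
  intro L E
  have hSmeas : MeasurableSet (X ⁻¹' {x | φ' x < 1/2}) :=
    hX (measurableSet_lt hφ'm measurable_const)
  set S : Set Ω := X ⁻¹' {x | φ' x < 1/2} with hSdef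
  have hA : {ω | ybay (X ω) ≠ yhat (X ω)} = X ⁻¹' {x | (1/2:ℝ) ≤ φ' x} := by
    ext ω
    simp only [Set.mem_setOf_eq, Set.mem_preimage]
    rw [ne_comm]
    exact hiff (X ω)
  have hSL : μ S = μ (L (1/2)) := by
    have h1 : S ⊆ L (1/2) := by intro ω h; show φ' (X ω) ≤ 1/2; exact le_of_lt h
    apply le_antisymm (measure_mono h1)
    calc μ (L (1/2)) ≤ μ (S ∪ X ⁻¹' {x | φ' x = 1/2}) := by
          apply measure_mono
          intro ω h
          have h0 : φ' (X ω) ≤ 1/2 := h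
          rcases lt_or_eq_of_le h0 with h' | h'
          · exact Or.inl h'
          · exact Or.inr h'
      _ ≤ μ S + μ (X ⁻¹' {x | φ' x = 1/2}) := measure_union_le _ _
      _ = μ S := by rw [hatom, add_zero]
  have hkey : ∀ β : ℝ, 1/2 ≤ β →
      μ ({ω | ybay (X ω) ≠ yhat (X ω)} ∩ L β) = μ (L β) - μ (L (1/2)) := by
    intro β hβ
    have hset : {ω | ybay (X ω) ≠ yhat (X ω)} ∩ L β = L β \ S := by
      rw [hA]
      ext ω
      simp only [Set.mem_inter_iff, Set.mem_preimage, Set.mem_setOf_eq, Set.mem_diff,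
        hSdef, not_lt, L]
      tauto
    have hsub : S ⊆ L β := by intro ω h; show φ' (X ω) ≤ β; exact le_trans (le_of_lt h) hβ
    rw [hset, measure_diff hsub hSmeas.nullMeasurableSet (measure_ne_top μ S), hSL]
  have hE : ∀ β, 0 < μ (L β) →
      E β = max 0 (1 - (μ (L (1/2))).toReal / (μ (L β)).toReal) := by
    intro β hβ
    by_cases h : 1/2 ≤ β
    · have hle : μ (L (1/2)) ≤ μ (L β) := measure_mono (fun ω hw => le_trans hw h)
      have hbpos : 0 < (μ (L β)).toReal := ENNReal.toReal_pos hβ.ne' (measure_ne_top μ _)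
      have hrle : (μ (L (1/2))).toReal ≤ (μ (L β)).toReal :=
        ENNReal.toReal_mono (measure_ne_top μ _) hle
      show (μ ({ω | ybay (X ω) ≠ yhat (X ω)} ∩ L β)).toReal / (μ (L β)).toReal = _
      rw [hkey β h, ENNReal.toReal_sub_of_le hle (measure_ne_top μ _), max_eq_right, sub_div,
        div_self hbpos.ne']
      have : (μ (L (1/2))).toReal / (μ (L β)).toReal ≤ 1 := by
        rw [div_le_one hbpos]; exact hrle
      linarith
    · push_neg at h
      have hempty : {ω | ybay (X ω) ≠ yhat (X ω)} ∩ L β = ∅ := by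
        rw [hA]
        ext ω
        simp only [Set.mem_inter_iff, Set.mem_preimage, Set.mem_setOf_eq, Set.mem_empty_iff_false,
          iff_false, not_and, not_le, L]
        intro h1
        linarith
      have hle : μ (L β) ≤ μ (L (1/2)) := measure_mono (fun ω hw => le_trans hw h.le)
      have hbpos : 0 < (μ (L β)).toReal := ENNReal.toReal_pos hβ.ne' (measure_ne_top μ _)
      have hrge : (μ (L β)).toReal ≤ (μ (L (1/2))).toReal :=
        ENNReal.toReal_mono (measure_ne_top μ _) hle
      show (μ ({ω | ybay (X ω) ≠ yhat (X ω)} ∩ L β)).toReal / (μ (L β)).toReal = _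
      rw [hempty, measure_empty, ENNReal.toReal_zero, zero_div, max_eq_left]
      have : 1 ≤ (μ (L (1/2))).toReal / (μ (L β)).toReal := by
        rw [le_div_iff₀ hbpos, one_mul]; exact hrge
      linarith
  refine ⟨hE, ?_, ?_, ?_⟩
  · intro β hβ0 hβ hpos
    rw [hE β hpos]
    have hle : μ (L β) ≤ μ (L (1/2)) := measure_mono (fun ω hw => le_trans hw hβ)
    have hbpos : 0 < (μ (L β)).toReal := ENNReal.toReal_pos hpos.ne' (measure_ne_top μ _)
    have hrge : (μ (L β)).toReal ≤ (μ (L (1/2))).toReal :=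
      ENNReal.toReal_mono (measure_ne_top μ _) hle
    have : 1 ≤ (μ (L (1/2))).toReal / (μ (L β)).toReal := by
      rw [le_div_iff₀ hbpos, one_mul]; exact hrge
    rw [max_eq_left (by linarith)]
  · intro β γ hβ hβγ hγ hpos
    have hposγ : 0 < μ (L γ) := lt_of_lt_of_le hpos (measure_mono (fun ω hw => le_trans hw hβγ))
    rw [hE β hpos, hE γ hposγ]
    have hbpos : 0 < (μ (L β)).toReal := ENNReal.toReal_pos hpos.ne' (measure_ne_top μ _)
    have habs : (μ (L β)).toReal ≤ (μ (L γ)).toReal :=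
      ENNReal.toReal_mono (measure_ne_top μ _)
        (measure_mono (fun ω hw => le_trans hw hβγ))
    apply max_le_max le_rfl
    have : (μ (L (1/2))).toReal / (μ (L γ)).toReal ≤ (μ (L (1/2))).toReal / (μ (L β)).toReal := by
      gcongr
    linarith
  · have huniv : L 1 = Set.univ := by
      ext ω
      simp only [Set.mem_preimage, Set.mem_setOf_eq, Set.mem_univ, iff_true, L]
      exact (hφ'range (X ω)).2
    show (μ ({ω | ybay (X ω) ≠ yhat (X ω)} ∩ L 1)).toReal / (μ (L 1)).toReal = _
    rw [huniv, Set.inter_univ, measure_univ, ENNReal.toReal_one, div_one]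
end

section
/- Let S and S' be i.i.d. real-valued random variables, and V, V' be i.i.d. {0,1}-valued random variables with (S,V) independent of (S',V') and (S,V) distributed as (S',V'). Suppose P(V=1) = 1 − ACC with 0 < ACC < 1, and ties S = S' occur with probability 0. Define G-AUC = P(V = 1 | S ≤ S') and UQ-AUC = P(S < S' | V < V'). Then G-AUC = (1 − ACC)² + 2(1 − UQ-AUC)(1 − ACC)·ACC. -/
open MeasureTheory ProbabilityTheory

/-- For i.i.d. pairs `(S, V)` and `(S', V')` (score, misclassification indicator)
with `P(V = 1) = 1 - ACC`, `0 < ACC < 1` and no ties in the scores,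
`G-AUC = P(V = 1 | S ≤ S')` and `UQ-AUC = P(S < S' | V = 0, V' = 1)` satisfy
`G-AUC = (1 - ACC)² + 2 (1 - UQ-AUC)(1 - ACC) ACC`. -/
theorem stmt_4 {Ω : Type*} [MeasurableSpace Ω]
    (μ : Measure Ω) [IsProbabilityMeasure μ]
    (S S' : Ω → ℝ) (V V' : Ω → Bool)
    (hS : Measurable S) (hS' : Measurable S')
    (hV : Measurable V) (hV' : Measurable V')
    (hindep : IndepFun (fun ω => (S ω, V ω)) (fun ω => (S' ω, V' ω)) μ)
    (hid : Measure.map (fun ω => (S ω, V ω)) μ = Measure.map (fun ω => (S' ω, V' ω)) μ)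
    (ACC : ℝ) (hACC0 : 0 < ACC) (hACC1 : ACC < 1)
    (hACC : (μ {ω | V ω = true}).toReal = 1 - ACC)
    (hties : μ {ω | S ω = S' ω} = 0) :
    (μ ({ω | V ω = true} ∩ {ω | S ω ≤ S' ω})).toReal / (μ {ω | S ω ≤ S' ω}).toReal
      = (1 - ACC) ^ 2
        + 2 * (1 - (μ ({ω | S ω < S' ω} ∩ {ω | V ω = false ∧ V' ω = true})).toReal
                / (μ {ω | V ω = false ∧ V' ω = true}).toReal)
          * (1 - ACC) * ACC := by
  classical
  have hfm : Measurable fun ω => (S ω, V ω) := hS.prodMk hV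
  have hgm : Measurable fun ω => (S' ω, V' ω) := hS'.prodMk hV'
  have hTm : Measurable fun ω => ((S ω, V ω), (S' ω, V' ω)) := hfm.prodMk hgm
  have hT'm : Measurable fun ω => ((S' ω, V' ω), (S ω, V ω)) := hgm.prodMk hfm
  have hmapT : μ.map (fun ω => ((S ω, V ω), (S' ω, V' ω)))
      = (μ.map fun ω => (S ω, V ω)).prod (μ.map fun ω => (S ω, V ω)) := by
    rw [(indepFun_iff_map_prod_eq_prod_map_map hfm.aemeasurable hgm.aemeasurable).mp hindep,
      ← hid]
  have hmapT' : μ.map (fun ω => ((S' ω, V' ω), (S ω, V ω)))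
      = (μ.map fun ω => (S ω, V ω)).prod (μ.map fun ω => (S ω, V ω)) := by
    have hc : (fun ω => ((S' ω, V' ω), (S ω, V ω)))
        = Prod.swap ∘ (fun ω => ((S ω, V ω), (S' ω, V' ω))) := rfl
    rw [hc, ← Measure.map_map measurable_swap hTm, hmapT, Measure.prod_swap]
  have exch : ∀ A : Set ((ℝ × Bool) × (ℝ × Bool)), MeasurableSet A →
      μ ((fun ω => ((S ω, V ω), (S' ω, V' ω))) ⁻¹' A)
        = μ ((fun ω => ((S' ω, V' ω), (S ω, V ω))) ⁻¹' A) := by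
    intro A hA
    rw [← Measure.map_apply hTm hA, ← Measure.map_apply hT'm hA, hmapT, hmapT']
  have hprod : ∀ B C : Set (ℝ × Bool), MeasurableSet B → MeasurableSet C →
      μ ((fun ω => ((S ω, V ω), (S' ω, V' ω))) ⁻¹' (B ×ˢ C))
        = μ ((fun ω => (S ω, V ω)) ⁻¹' B) * μ ((fun ω => (S ω, V ω)) ⁻¹' C) := by
    intro B C hB hC
    rw [← Measure.map_apply hTm (hB.prod hC), hmapT, Measure.prod_prod,
      Measure.map_apply hfm hB, Measure.map_apply hfm hC]
  -- measurability of basic sets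
  have hle : MeasurableSet {ω | S ω ≤ S' ω} := measurableSet_le hS hS'
  have hltr : MeasurableSet {ω | S' ω < S ω} := measurableSet_lt hS' hS
  have hmV : MeasurableSet {ω | V ω = true} := hV (measurableSet_singleton true)
  have hmV' : MeasurableSet {ω | V' ω = true} := hV' (measurableSet_singleton true)
  have hmVf : MeasurableSet {ω | V ω = false} := hV (measurableSet_singleton false)
  have hmV'f : MeasurableSet {ω | V' ω = false} := hV' (measurableSet_singleton false)
  have hcompl : {ω | S ω ≤ S' ω}ᶜ = {ω | S' ω < S ω} := by
    ext ω; simp [not_le]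
  -- partition: E = (E ∩ {S≤S'}) ⊔ (E ∩ {S'<S})
  have hpart : ∀ E : Set Ω,
      μ (E ∩ {ω | S ω ≤ S' ω}) + μ (E ∩ {ω | S' ω < S ω}) = μ E := by
    intro E
    have := measure_inter_add_diff (μ := μ) E hle
    rwa [Set.diff_eq, hcompl] at this
  -- ties: μ (E ∩ {S ≤ S'}) = μ (E ∩ {S < S'})
  have htie : ∀ E : Set Ω, μ (E ∩ {ω | S ω ≤ S' ω}) = μ (E ∩ {ω | S ω < S' ω}) := by
    intro E
    refine le_antisymm ?_
      (measure_mono (by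
        rintro ω ⟨hE, h⟩
        have h' : S ω < S' ω := h
        exact ⟨hE, show S ω ≤ S' ω from le_of_lt h'⟩))
    calc μ (E ∩ {ω | S ω ≤ S' ω})
        ≤ μ ((E ∩ {ω | S ω < S' ω}) ∪ {ω | S ω = S' ω}) := by
          refine measure_mono ?_
          rintro ω ⟨hE, hle'⟩
          have hle'' : S ω ≤ S' ω := hle'
          rcases lt_or_eq_of_le hle'' with h | h
          · exact Or.inl ⟨hE, show S ω < S' ω from h⟩
          · exact Or.inr (show S ω = S' ω from h)
      _ ≤ μ (E ∩ {ω | S ω < S' ω}) + μ {ω | S ω = S' ω} := measure_union_le _ _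
      _ = μ (E ∩ {ω | S ω < S' ω}) := by rw [hties, add_zero]
  -- exchange facts
  have F1 : μ {ω | S' ω < S ω} = μ {ω | S ω < S' ω} := by
    have h := exch {q | q.2.1 < q.1.1}
      (measurableSet_lt measurable_snd.fst measurable_fst.fst)
    simpa [Set.preimage_setOf_eq] using h
  have F2 : μ {ω | (V ω = true ∧ V' ω = true) ∧ S' ω < S ω}
      = μ {ω | (V' ω = true ∧ V ω = true) ∧ S ω < S' ω} := by
    have h := exch {q | (q.1.2 = true ∧ q.2.2 = true) ∧ q.2.1 < q.1.1}
      (((measurable_fst.snd (measurableSet_singleton true)).inter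
        (measurable_snd.snd (measurableSet_singleton true))).inter
        (measurableSet_lt measurable_snd.fst measurable_fst.fst))
    simpa [Set.preimage_setOf_eq] using h
  have F3 : μ {ω | (V ω = true ∧ V' ω = false) ∧ S' ω < S ω}
      = μ {ω | (V' ω = true ∧ V ω = false) ∧ S ω < S' ω} := by
    have h := exch {q | (q.1.2 = true ∧ q.2.2 = false) ∧ q.2.1 < q.1.1}
      (((measurable_fst.snd (measurableSet_singleton true)).inter
        (measurable_snd.snd (measurableSet_singleton false))).inter
        (measurableSet_lt measurable_snd.fst measurable_fst.fst))
    simpa [Set.preimage_setOf_eq] using h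
  -- product facts
  have P1 : μ {ω | V ω = true ∧ V' ω = true} = μ {ω | V ω = true} * μ {ω | V ω = true} := by
    have h := hprod {x | x.2 = true} {x | x.2 = true}
      (measurable_snd (measurableSet_singleton true))
      (measurable_snd (measurableSet_singleton true))
    simpa [Set.prod, Set.preimage_setOf_eq, Set.mk_preimage_prod, Set.setOf_and] using h
  have P2 : μ {ω | V ω = true ∧ V' ω = false} = μ {ω | V ω = true} * μ {ω | V ω = false} := by
    have h := hprod {x | x.2 = true} {x | x.2 = false}
      (measurable_snd (measurableSet_singleton true))
      (measurable_snd (measurableSet_singleton false))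
    simpa [Set.prod, Set.preimage_setOf_eq, Set.mk_preimage_prod, Set.setOf_and] using h
  have P3 : μ {ω | V ω = false ∧ V' ω = true} = μ {ω | V ω = false} * μ {ω | V ω = true} := by
    have h := hprod {x | x.2 = false} {x | x.2 = true}
      (measurable_snd (measurableSet_singleton false))
      (measurable_snd (measurableSet_singleton true))
    simpa [Set.prod, Set.preimage_setOf_eq, Set.mk_preimage_prod, Set.setOf_and] using h
  -- accuracy facts
  have hVf : (μ {ω | V ω = false}).toReal = ACC := by
    have hc : {ω | V ω = false} = {ω | V ω = true}ᶜ := by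
      ext ω; simp
    rw [hc, prob_compl_eq_one_sub hmV,
      ENNReal.toReal_sub_of_le prob_le_one ENNReal.one_ne_top, ENNReal.toReal_one, hACC]
    ring
  have tadd : ∀ s t : Set Ω, (μ s + μ t).toReal = (μ s).toReal + (μ t).toReal :=
    fun s t => ENNReal.toReal_add (measure_ne_top μ s) (measure_ne_top μ t)
  -- d = 1/2
  have hd : (μ {ω | S ω ≤ S' ω}).toReal = 1 / 2 := by
    have h0 := hpart Set.univ
    rw [Set.univ_inter, Set.univ_inter] at h0
    have ht0 : μ {ω | S ω ≤ S' ω} = μ {ω | S ω < S' ω} := by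
      have := htie Set.univ
      simpa using this
    have h1 : μ {ω | S' ω < S ω} = μ {ω | S ω ≤ S' ω} := F1.trans ht0.symm
    rw [h1, measure_univ] at h0
    have h2 := congrArg ENNReal.toReal h0
    rw [tadd] at h2
    simp at h2
    linarith
  -- E1 part : 2 * μ(E1 ∩ {S≤S'}) = (1-ACC)^2
  set E1 : Set Ω := {ω | V ω = true ∧ V' ω = true} with hE1
  set E0 : Set Ω := {ω | V ω = true ∧ V' ω = false} with hE0
  have hE1eq : μ (E1 ∩ {ω | S' ω < S ω}) = μ (E1 ∩ {ω | S ω ≤ S' ω}) := by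
    have e1 : E1 ∩ {ω | S' ω < S ω} = {ω | (V ω = true ∧ V' ω = true) ∧ S' ω < S ω} := rfl
    have e2 : {ω | (V' ω = true ∧ V ω = true) ∧ S ω < S' ω} = E1 ∩ {ω | S ω < S' ω} := by
      ext ω; constructor
      · rintro ⟨⟨h1, h2⟩, h3⟩; exact ⟨⟨h2, h1⟩, h3⟩
      · rintro ⟨⟨h1, h2⟩, h3⟩; exact ⟨⟨h2, h1⟩, h3⟩
    rw [e1, F2, e2, ← htie E1]
  have hA1 : (μ (E1 ∩ {ω | S ω ≤ S' ω})).toReal * 2 = (1 - ACC) * (1 - ACC) := by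
    have h0 := hpart E1
    rw [hE1eq] at h0
    have h2 := congrArg ENNReal.toReal h0
    rw [tadd, P1, ENNReal.toReal_mul, hACC] at h2
    linarith
  -- E0 part
  have hB1 : (μ (E0 ∩ {ω | S ω ≤ S' ω})).toReal
      = (1 - ACC) * ACC
        - (μ ({ω | S ω < S' ω} ∩ {ω | V ω = false ∧ V' ω = true})).toReal := by
    have e1 : E0 ∩ {ω | S' ω < S ω} = {ω | (V ω = true ∧ V' ω = false) ∧ S' ω < S ω} := rfl
    have e2 : {ω | (V' ω = true ∧ V ω = false) ∧ S ω < S' ω}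
        = {ω | S ω < S' ω} ∩ {ω | V ω = false ∧ V' ω = true} := by
      ext ω; constructor
      · rintro ⟨⟨h1, h2⟩, h3⟩; exact ⟨h3, h2, h1⟩
      · rintro ⟨h3, h2, h1⟩; exact ⟨⟨h1, h2⟩, h3⟩
    have h0 := hpart E0
    rw [e1, F3, e2] at h0
    have h2 := congrArg ENNReal.toReal h0
    rw [tadd, P2, ENNReal.toReal_mul, hACC, hVf] at h2
    linarith
  -- numerator decomposition
  have hnum : μ ({ω | V ω = true} ∩ {ω | S ω ≤ S' ω})
      = μ (E1 ∩ {ω | S ω ≤ S' ω}) + μ (E0 ∩ {ω | S ω ≤ S' ω}) := by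
    have hu : {ω | V ω = true} ∩ {ω | S ω ≤ S' ω}
        = (E1 ∩ {ω | S ω ≤ S' ω}) ∪ (E0 ∩ {ω | S ω ≤ S' ω}) := by
      ext ω
      rcases Bool.eq_false_or_eq_true (V' ω) with h | h <;>
        simp [hE1, hE0, Set.mem_inter_iff, h]
    have hdisj : Disjoint (E1 ∩ {ω | S ω ≤ S' ω}) (E0 ∩ {ω | S ω ≤ S' ω}) := by
      refine Set.disjoint_left.mpr ?_
      rintro ω ⟨⟨_, h1⟩, _⟩ ⟨⟨_, h2⟩, _⟩
      rw [h1] at h2; exact Bool.noConfusion h2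
    rw [hu, measure_union hdisj ((hmV.inter hmV'f).inter hle)]
  -- w
  have hw : (μ {ω | V ω = false ∧ V' ω = true}).toReal = ACC * (1 - ACC) := by
    rw [P3, ENNReal.toReal_mul, hVf, hACC]
  -- finish
  have hnum' : (μ ({ω | V ω = true} ∩ {ω | S ω ≤ S' ω})).toReal
      = (μ (E1 ∩ {ω | S ω ≤ S' ω})).toReal + (μ (E0 ∩ {ω | S ω ≤ S' ω})).toReal := by
    rw [hnum, tadd]
  rw [hnum', hd, hB1, hw]
  have h1 : (1 : ℝ) - ACC ≠ 0 := by linarith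
  have h2 : ACC ≠ 0 := ne_of_gt hACC0
  set a := (μ (E1 ∩ {ω | S ω ≤ S' ω})).toReal with ha
  set u := (μ ({ω | S ω < S' ω} ∩ {ω | V ω = false ∧ V' ω = true})).toReal with hu
  have key : 2 * (1 - u / (ACC * (1 - ACC))) * (1 - ACC) * ACC
      = 2 * (1 - ACC) * ACC - 2 * u := by
    field_simp
  rw [key]
  have hhalf : (a + ((1 - ACC) * ACC - u)) / (1 / 2)
      = 2 * a + 2 * (1 - ACC) * ACC - 2 * u := by ring
  rw [hhalf]
  nlinarith [hA1]
end
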